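/- Let Z ∈ Q(t) with ord_{t⁻¹}(Z) > 0. Then there exists a rational number y > 0 such that the rational function (y − t)·Z² + 1 takes strictly positive values at every real number r, i.e., is positive definite on R. -/

import Mathlib

open Polynomial Filter

/-- If `Z ∈ ℚ(t)` has `ord_{t⁻¹}(Z) > 0` (i.e. `Z = 0` or `Z` has negative
degree), then there is a positive rational `y` such that the rational function
`(y - t)·Z² + 1` takes strictly positive values at every real number at which
it is defined. -/
theorem stmt13 (Z : RatFunc ℚ) (hZ : Z = 0 ∨ Z.intDegree < 0) :
    ∃ y : ℚ, 0 < y ∧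
      ∀ r : ℝ,
        Polynomial.eval r
            (Polynomial.map (algebraMap ℚ ℝ)
              ((RatFunc.C y - RatFunc.X) * Z ^ 2 + 1).denom) ≠ 0 →
        0 < RatFunc.eval (algebraMap ℚ ℝ) r
            ((RatFunc.C y - RatFunc.X) * Z ^ 2 + 1) := by
  rcases hZ with h0 | hdeg
  · refine ⟨1, one_pos, fun r _ => ?_⟩
    subst h0
    have h1 : (RatFunc.C (1:ℚ) - RatFunc.X) * (0:RatFunc ℚ) ^ 2 + 1 = 1 := by ring
    rw [h1]
    simp [RatFunc.eval]
  · -- setup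
    have hZne : Z ≠ 0 := by rintro rfl; simp at hdeg
    have hnd0 : Z.num.natDegree < Z.denom.natDegree := by
      have h := hdeg
      rw [RatFunc.intDegree] at h
      omega
    set p := Z.num with hp
    set q := Z.denom with hqdef
    have hpne : p ≠ 0 := RatFunc.num_ne_zero hZne
    have hqne : q ≠ 0 := Z.denom_ne_zero
    have hnd : p.natDegree < q.natDegree := hnd0
    set f := algebraMap ℚ ℝ with hf
    set P := p.map f with hPdef
    set Q := q.map f with hQdef
    have hfinj : Function.Injective f := (algebraMap ℚ ℝ).injective
    have hPne : P ≠ 0 := (Polynomial.map_ne_zero_iff hfinj).mpr hpne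
    have hQne : Q ≠ 0 := (Polynomial.map_ne_zero_iff hfinj).mpr hqne
    have hnd' : P.natDegree < Q.natDegree := by
      rwa [hPdef, hQdef, Polynomial.natDegree_map, Polynomial.natDegree_map]
    set R : Polynomial ℝ := Q ^ 2 - Polynomial.X * P ^ 2 with hR
    have hdlt : (Polynomial.X * P ^ 2).degree < (Q ^ 2).degree := by
      apply Polynomial.degree_lt_degree
      rw [Polynomial.natDegree_mul Polynomial.X_ne_zero (pow_ne_zero 2 hPne),
        Polynomial.natDegree_X, Polynomial.natDegree_pow, Polynomial.natDegree_pow]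
      omega
    have hRdeg : R.degree = (Q ^ 2).degree := by
      rw [hR]; exact Polynomial.degree_sub_eq_left_of_degree_lt hdlt
    have hRlead : R.leadingCoeff = (Q ^ 2).leadingCoeff := by
      rw [hR, sub_eq_add_neg, add_comm]
      exact Polynomial.leadingCoeff_add_of_degree_lt (by rwa [Polynomial.degree_neg])
    have hRdegpos : 0 < R.degree := by
      rw [hRdeg]
      have h1 : 0 < (Q ^ 2).natDegree := by rw [Polynomial.natDegree_pow]; omega
      exact Polynomial.natDegree_pos_iff_degree_pos.mp h1
    have hRlead' : 0 ≤ R.leadingCoeff := by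
      rw [hRlead, Polynomial.leadingCoeff_pow]
      positivity
    have htend : Tendsto (fun x => R.eval x) atTop atTop :=
      R.tendsto_atTop_of_leadingCoeff_nonneg hRdegpos hRlead'
    obtain ⟨b, hb⟩ := (htend.eventually_gt_atTop 0).exists_forall_of_atTop
    obtain ⟨y, hy⟩ := exists_rat_gt (max b 0)
    have hy0 : (0:ℝ) < (y:ℝ) := lt_of_le_of_lt (le_max_right b 0) hy
    have hby : b ≤ (y:ℝ) := le_of_lt (lt_of_le_of_lt (le_max_left b 0) hy)
    refine ⟨y, by exact_mod_cast hy0, ?_⟩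
    -- key algebraic identity
    set W : RatFunc ℚ := (RatFunc.C y - RatFunc.X) * Z ^ 2 + 1 with hW
    set A : Polynomial ℚ := (Polynomial.C y - Polynomial.X) * p ^ 2 + q ^ 2 with hA
    have hqmap : (algebraMap (Polynomial ℚ) (RatFunc ℚ)) q ≠ 0 := by
      simpa using hqne
    have hWAB : W = algebraMap (Polynomial ℚ) (RatFunc ℚ) A /
        algebraMap (Polynomial ℚ) (RatFunc ℚ) (q ^ 2) := by
      rw [hW, hA, ← RatFunc.num_div_denom Z, ← hp, ← hqdef]
      field_simp
      simp only [map_pow, map_add, map_mul, map_sub, RatFunc.algebraMap_C, RatFunc.algebraMap_X]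
      ring
    have hWdne : (algebraMap (Polynomial ℚ) (RatFunc ℚ)) W.denom ≠ 0 := by
      simpa using W.denom_ne_zero
    have hq2ne : (algebraMap (Polynomial ℚ) (RatFunc ℚ)) (q ^ 2) ≠ 0 := by
      simpa using pow_ne_zero 2 hqne
    have key : W.num * q ^ 2 = A * W.denom := by
      apply IsFractionRing.injective (Polynomial ℚ) (RatFunc ℚ)
      have h1 : algebraMap (Polynomial ℚ) (RatFunc ℚ) W.num /
          algebraMap (Polynomial ℚ) (RatFunc ℚ) W.denom =
          algebraMap (Polynomial ℚ) (RatFunc ℚ) A /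
          algebraMap (Polynomial ℚ) (RatFunc ℚ) (q ^ 2) := by
        rw [RatFunc.num_div_denom, ← hWAB]
      rw [map_mul, map_mul]
      exact (div_eq_div_iff hWdne hq2ne).mp h1
    -- pass to ℝ and evaluate
    intro r hden
    have keyR : (W.num.map f).eval r * (Q.eval r) ^ 2 =
        ((f y - r) * (P.eval r) ^ 2 + (Q.eval r) ^ 2) * (W.denom.map f).eval r := by
      have h2 := congrArg (fun s => Polynomial.eval r (s.map f)) key
      simpa [hA, hPdef, hQdef, Polynomial.eval_mul, Polynomial.eval_add,
        Polynomial.eval_sub, Polynomial.eval_pow, Polynomial.map_mul,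
        Polynomial.map_add, Polynomial.map_sub, Polynomial.map_pow] using h2
    -- coprimality
    have hcop : IsCoprime P Q := by simpa using (RatFunc.isCoprime_num_denom Z).map (Polynomial.mapRingHom f)
    have hnotboth : ¬ (P.eval r = 0 ∧ Q.eval r = 0) := by
      rintro ⟨h1, h2⟩
      obtain ⟨u, v, huv⟩ := hcop
      have := congrArg (Polynomial.eval r) huv
      simp [h1, h2] at this
    -- positivity of A at r
    have ha : 0 < (f y - r) * (P.eval r) ^ 2 + (Q.eval r) ^ 2 := by
      have hfy : f y = (y:ℝ) := by simp [hf]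
      rw [hfy]
      rcases lt_or_ge r y with h | h
      · rcases eq_or_ne (Q.eval r) 0 with h2 | h2
        · have h1 : P.eval r ≠ 0 := fun h1 => hnotboth ⟨h1, h2⟩
          have : (0:ℝ) < (P.eval r) ^ 2 := by positivity
          nlinarith
        · have : (0:ℝ) < (Q.eval r) ^ 2 := by positivity
          nlinarith [sq_nonneg (P.eval r), sub_nonneg.mpr (le_of_lt h)]
      · have hRr : 0 < R.eval r := hb r (le_trans hby h)
        have hRr' : 0 < (Q.eval r) ^ 2 - r * (P.eval r) ^ 2 := by
          simpa [hR] using hRr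
        nlinarith [sq_nonneg (P.eval r)]
    -- conclude
    rw [RatFunc.eval]
    rw [Polynomial.eval₂_eq_eval_map, Polynomial.eval₂_eq_eval_map]
    have hd : (W.denom.map f).eval r ≠ 0 := hden
    have hqr : Q.eval r ≠ 0 := by
      intro h0
      have h00 : (0:ℝ) = ((f y - r) * (P.eval r) ^ 2 + (Q.eval r) ^ 2) *
          (W.denom.map f).eval r := by
        rw [← keyR, h0]; ring
      exact (mul_ne_zero (ne_of_gt ha) hd) h00.symm
    have hbne : (Q.eval r) ^ 2 ≠ 0 := pow_ne_zero 2 hqr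
    have hbpos : 0 < (Q.eval r) ^ 2 := lt_of_le_of_ne (sq_nonneg _) (Ne.symm hbne)
    have : (W.num.map f).eval r / (W.denom.map f).eval r =
        ((f y - r) * (P.eval r) ^ 2 + (Q.eval r) ^ 2) / (Q.eval r) ^ 2 :=
      (div_eq_div_iff hd hbne).mpr keyR
    rw [this]
    positivity
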